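/- Let n ≥ 1 and let Δ_1, …, Δ_n be strictly positive reals, ρ_1, …, ρ_n ∈ [0,1), and let N, L be reals with Σ_{i=1}^n ρ_i < L < N. Define, for θ ≥ 0, δ(θ) = (Σ_{i=1}^n (1 − ρ_i)·Δ_i/(Δ_i + θ)) / (Σ_{i=1}^n (1 − ρ_i)/(Δ_i + θ)). Then there exists θ ≥ 0 such that θ·(L − Σ_{i=1}^n ρ_i) = (N − L)·δ(θ). -/

import Mathlib

/-- Existence of the mean vacation interval `θ` in the mean-field description of a WDM
PON with heterogeneous switch overheads: with `δ(θ)` the weighted average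
`(∑ (1 − ρ i)·Δ i/(Δ i + θ)) / (∑ (1 − ρ i)/(Δ i + θ))`, there exists `θ ≥ 0` with
`θ·(L − ∑ ρ i) = (N − L)·δ(θ)`. -/
theorem stmt_7 (n : ℕ) (hn : 1 ≤ n) (Δ ρ : Fin n → ℝ)
    (hΔ : ∀ i, 0 < Δ i) (hρ : ∀ i, ρ i ∈ Set.Ico (0 : ℝ) 1)
    (N L : ℝ) (hρL : ∑ i, ρ i < L) (hLN : L < N) :
    ∃ θ : ℝ, 0 ≤ θ ∧
      θ * (L - ∑ i, ρ i) =
        (N - L) * ((∑ i, (1 - ρ i) * Δ i / (Δ i + θ)) / (∑ i, (1 - ρ i) / (Δ i + θ))) := by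
  set S := ∑ i, ρ i with hS
  set num : ℝ → ℝ := fun θ => ∑ i, (1 - ρ i) * Δ i / (Δ i + θ) with hnum
  set den : ℝ → ℝ := fun θ => ∑ i, (1 - ρ i) / (Δ i + θ) with hden
  set B : ℝ := ∑ i, Δ i with hB
  have hcS : 0 < L - S := by linarith
  have hNL : 0 < N - L := by linarith
  have hΔθ : ∀ (θ : ℝ), 0 ≤ θ → ∀ i, 0 < Δ i + θ := fun θ hθ i => by
    have := hΔ i; linarith
  have hρi : ∀ i, 0 < 1 - ρ i := fun i => by have := (hρ i).2; linarith
  have hden_pos : ∀ (θ : ℝ), 0 ≤ θ → 0 < den θ := by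
    intro θ hθ
    apply Finset.sum_pos
    · intro i _
      exact div_pos (hρi i) (hΔθ θ hθ i)
    · exact Finset.univ_nonempty_iff.mpr (Fin.pos_iff_nonempty.mp hn)
  have hnum_nonneg : ∀ (θ : ℝ), 0 ≤ θ → 0 ≤ num θ := by
    intro θ hθ
    apply Finset.sum_nonneg
    intro i _
    exact div_nonneg (mul_nonneg (hρi i).le (hΔ i).le) (hΔθ θ hθ i).le
  have hBpos : 0 < B := Finset.sum_pos (fun i _ => hΔ i)
    (Finset.univ_nonempty_iff.mpr (Fin.pos_iff_nonempty.mp hn))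
  have hΔleB : ∀ i, Δ i ≤ B := by
    intro i
    exact Finset.single_le_sum (f := Δ) (fun j _ => (hΔ j).le) (Finset.mem_univ i)
  have hnum_le : ∀ (θ : ℝ), 0 ≤ θ → num θ ≤ B * den θ := by
    intro θ hθ
    rw [hnum, hden, Finset.mul_sum]
    apply Finset.sum_le_sum
    intro i _
    have h : 0 < Δ i + θ := hΔθ θ hθ i
    rw [mul_div_assoc', div_le_div_iff₀ h h]
    nlinarith [mul_nonneg (mul_nonneg (sub_nonneg.mpr (hΔleB i)) (hρi i).le) h.le]
  set M : ℝ := (N - L) * B / (L - S) with hM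
  have hM0 : 0 ≤ M := le_of_lt (div_pos (mul_pos hNL hBpos) hcS)
  set g : ℝ → ℝ := fun θ => θ * (L - S) - (N - L) * (num θ / den θ) with hg
  have hcont : ContinuousOn g (Set.Icc 0 M) := by
    apply ContinuousOn.sub
    · exact (continuousOn_id.mul continuousOn_const)
    apply ContinuousOn.mul continuousOn_const
    apply ContinuousOn.div
    · apply continuousOn_finset_sum
      intro i _
      exact ContinuousOn.div continuousOn_const (continuousOn_const.add continuousOn_id)
        (fun θ hθ => (hΔθ θ hθ.1 i).ne')
    · apply continuousOn_finset_sum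
      intro i _
      exact ContinuousOn.div continuousOn_const (continuousOn_const.add continuousOn_id)
        (fun θ hθ => (hΔθ θ hθ.1 i).ne')
    · intro θ hθ
      exact (hden_pos θ hθ.1).ne'
  have hg0 : g 0 ≤ 0 := by
    have : 0 ≤ num 0 / den 0 := div_nonneg (hnum_nonneg 0 le_rfl) (hden_pos 0 le_rfl).le
    simp only [hg]
    nlinarith
  have hgM : 0 ≤ g M := by
    have h1 : num M / den M ≤ B := by
      rw [div_le_iff₀ (hden_pos M hM0)]
      exact hnum_le M hM0
    have h2 : M * (L - S) = (N - L) * B := by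
      rw [hM, div_mul_cancel₀ _ hcS.ne']
    simp only [hg]
    nlinarith
  have := intermediate_value_Icc hM0 hcont
  have h0 : (0 : ℝ) ∈ Set.Icc (g 0) (g M) := ⟨hg0, hgM⟩
  obtain ⟨θ, hθmem, hθeq⟩ := this h0
  refine ⟨θ, hθmem.1, ?_⟩
  have : θ * (L - S) - (N - L) * (num θ / den θ) = 0 := hθeq
  linarith
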